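/- Let Q be a 2n×2n Hermitian matrix with 2×2 blocks x_{jk}, and suppose a unit vector z is formed by taking z_k* = (1/√2, 0), z_j* = (λ̄_{jk}/(√2‖x_{jk}‖), −ω_{jk}/(√2‖x_{jk}‖)) for some fixed j ≠ k with x_{jk} = [[λ_{jk}, ω_{jk}],[-ω̄_{jk}, λ̄_{jk}]] ≠ 0, and z_l = 0 otherwise. Then z*Qz = ‖x_{jk}‖ + (1/2)(a_{jj} + a_{kk}), where x_{ll} = a_{ll}·I₂. In particular the largest eigenvalue of Q is at least ‖x_{jk}‖ + (1/2)(a_{jj} + a_{kk}). -/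

import Mathlib

open Matrix Complex

lemma sum_three {α : Type*} [Fintype α] [DecidableEq α] (f : α → ℂ) (a b c : α)
    (hab : a ≠ b) (hac : a ≠ c) (hbc : b ≠ c)
    (h0 : ∀ x, x ≠ a → x ≠ b → x ≠ c → f x = 0) :
    ∑ x, f x = f a + f b + f c := by
  classical
  rw [← Finset.sum_subset (Finset.subset_univ ({a, b, c} : Finset α))]
  · rw [Finset.sum_insert (by simp [hab, hac]), Finset.sum_insert (by simp [hbc]),
      Finset.sum_singleton, add_assoc]
  · intro x _ hx
    simp only [Finset.mem_insert, Finset.mem_singleton, not_or] at hx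
    exact h0 x hx.1 hx.2.1 hx.2.2

lemma rayleigh_le {m : Type*} [Fintype m] [DecidableEq m] [Nonempty m] {A : Matrix m m ℂ}
    (hA : A.IsHermitian) (z : m → ℂ) (hz : star z ⬝ᵥ z = 1) {c : ℝ}
    (hc : star z ⬝ᵥ A *ᵥ z = (c : ℂ)) : c ≤ ⨆ i, hA.eigenvalues i := by
  set U : Matrix m m ℂ := (hA.eigenvectorUnitary : Matrix m m ℂ) with hU
  set w : m → ℂ := star U *ᵥ z with hw
  have hsw : star w = star z ᵥ* U := by
    rw [hw, star_mulVec, Matrix.star_eq_conjTranspose, conjTranspose_conjTranspose]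
  have hUU : U * star U = 1 := (Matrix.mem_unitaryGroup_iff).mp hA.eigenvectorUnitary.2
  have key : (c : ℂ) = ∑ i, (hA.eigenvalues i : ℂ) * Complex.normSq (w i) := by
    rw [← hc]
    conv_lhs => rw [hA.spectral_theorem]
    rw [Unitary.conjStarAlgAut_apply, ← hU]
    rw [← mulVec_mulVec, ← mulVec_mulVec, dotProduct_mulVec, ← hsw, ← hw]
    simp only [dotProduct, Matrix.mulVec_diagonal, Function.comp_apply, Pi.star_apply,
      RCLike.star_def, RCLike.ofReal_alg]
    congr 1; ext i
    rw [← ((mul_comm _ _).trans (Complex.mul_conj (w i)))]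
    simp [Complex.real_smul]
    ring
  have key2 : (1 : ℂ) = ∑ i, (Complex.normSq (w i) : ℂ) := by
    rw [← hz]
    conv_lhs => rw [show star z ⬝ᵥ z = star z ⬝ᵥ (U * star U) *ᵥ z by rw [hUU, one_mulVec]]
    rw [← mulVec_mulVec, dotProduct_mulVec, ← hsw, ← hw]
    simp only [dotProduct, Pi.star_apply, RCLike.star_def]
    congr 1; ext i
    exact (mul_comm _ _).trans (Complex.mul_conj (w i))
  have keyR : c = ∑ i, hA.eigenvalues i * Complex.normSq (w i) := by
    have := key; push_cast at this; exact_mod_cast this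
  have key2R : (1 : ℝ) = ∑ i, Complex.normSq (w i) := by
    have := key2; exact_mod_cast this
  rw [keyR]
  calc ∑ i, hA.eigenvalues i * Complex.normSq (w i)
      ≤ ∑ i, (⨆ i, hA.eigenvalues i) * Complex.normSq (w i) := by
        refine Finset.sum_le_sum fun i _ => mul_le_mul_of_nonneg_right ?_ (Complex.normSq_nonneg _)
        exact le_ciSup (Set.Finite.bddAbove (Set.finite_range _)) i
    _ = ⨆ i, hA.eigenvalues i := by rw [← Finset.mul_sum, ← key2R, mul_one]

theorem block_quadratic_form_lower_bound {n : ℕ}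
    (Q : Matrix (Fin n × Fin 2) (Fin n × Fin 2) ℂ) (hQ : Q.IsHermitian)
    (lam om : Fin n → Fin n → ℂ) (a : Fin n → ℝ)
    -- off-diagonal 2×2 blocks have the quaternion form [[λ, ω], [-ω̄, λ̄]]
    (hblock : ∀ j k : Fin n, j ≠ k →
      Q (j, 0) (k, 0) = lam j k ∧ Q (j, 0) (k, 1) = om j k ∧
      Q (j, 1) (k, 0) = -(starRingEnd ℂ) (om j k) ∧
      Q (j, 1) (k, 1) = (starRingEnd ℂ) (lam j k))
    -- diagonal 2×2 blocks are a_{ll}·I₂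
    (hdiag : ∀ l : Fin n, ∀ s s' : Fin 2,
      Q (l, s) (l, s') = if s = s' then (a l : ℂ) else 0)
    (j k : Fin n) (hjk : j ≠ k)
    (hne : ¬(lam j k = 0 ∧ om j k = 0)) :
    let nrm : ℝ := Real.sqrt (Complex.normSq (lam j k) + Complex.normSq (om j k))
    -- z* is the row vector described in the statement
    let zc : Fin n × Fin 2 → ℂ := fun p =>
      if p = (k, 0) then ((Real.sqrt 2)⁻¹ : ℝ)
      else if p = (j, 0) then (starRingEnd ℂ) (lam j k) / (Real.sqrt 2 * nrm)
      else if p = (j, 1) then -(om j k) / (Real.sqrt 2 * nrm)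
      else 0
    zc ⬝ᵥ Q.mulVec (fun q => (starRingEnd ℂ) (zc q))
        = ((nrm + (a j + a k) / 2 : ℝ) : ℂ) ∧
    nrm + (a j + a k) / 2 ≤ ⨆ i, hQ.eigenvalues i := by
  intro nrm zc
  set L := lam j k with hL
  set W := om j k with hW
  -- basic positivity facts
  have hsum_pos : 0 < Complex.normSq L + Complex.normSq W := by
    rcases (not_and_or.mp hne) with h | h
    · have : 0 < Complex.normSq L := Complex.normSq_pos.mpr h
      linarith [Complex.normSq_nonneg W]
    · have : 0 < Complex.normSq W := Complex.normSq_pos.mpr h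
      linarith [Complex.normSq_nonneg L]
  have hNpos : 0 < nrm := Real.sqrt_pos.mpr hsum_pos
  have hN2 : nrm * nrm = Complex.normSq L + Complex.normSq W := by
    exact Real.mul_self_sqrt (le_of_lt hsum_pos)
  have hNne : (nrm : ℂ) ≠ 0 := by exact_mod_cast (ne_of_gt hNpos)
  have hs2pos : (0:ℝ) < Real.sqrt 2 := Real.sqrt_pos.mpr (by norm_num)
  have hs2ne : ((Real.sqrt 2 : ℝ) : ℂ) ≠ 0 := by exact_mod_cast (ne_of_gt hs2pos)
  have hs2 : (Real.sqrt 2 : ℝ) * Real.sqrt 2 = 2 := Real.mul_self_sqrt (by norm_num)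
  have hs2c : ((Real.sqrt 2 : ℝ) : ℂ) * ((Real.sqrt 2 : ℝ) : ℂ) = 2 := by
    exact_mod_cast congrArg (fun x : ℝ => (x : ℂ)) hs2
  have hsi : ((Real.sqrt 2 : ℝ) : ℂ) * ((Real.sqrt 2 : ℝ) : ℂ)⁻¹ = 1 := mul_inv_cancel₀ hs2ne
  have hNi : ((nrm : ℝ) : ℂ) * ((nrm : ℝ) : ℂ)⁻¹ = 1 := mul_inv_cancel₀ hNne
  have hN2c : (nrm : ℂ) * nrm = (starRingEnd ℂ) L * L + (starRingEnd ℂ) W * W := by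
    have : ((nrm * nrm : ℝ) : ℂ) = ((Complex.normSq L + Complex.normSq W : ℝ) : ℂ) := by
      exact_mod_cast congrArg (fun x : ℝ => (x : ℂ)) hN2
    push_cast at this
    rw [this, ← Complex.mul_conj, ← Complex.mul_conj]; ring
  -- distinctness of the three support points
  have d1 : ((k, 0) : Fin n × Fin 2) ≠ (j, 0) := by simp [Prod.ext_iff, hjk.symm]
  have d2 : ((k, 0) : Fin n × Fin 2) ≠ (j, 1) := by simp [Prod.ext_iff, hjk.symm]
  have d3 : ((j, 0) : Fin n × Fin 2) ≠ (j, 1) := by simp [Prod.ext_iff]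
  -- values of zc
  have zk0 : zc (k, 0) = ((Real.sqrt 2)⁻¹ : ℝ) := by simp [zc]
  have zj0 : zc (j, 0) = (starRingEnd ℂ) L / (Real.sqrt 2 * nrm) := by
    show (if _ then _ else _) = _
    rw [if_neg d1.symm, if_pos rfl]
  have zj1 : zc (j, 1) = -W / (Real.sqrt 2 * nrm) := by
    show (if _ then _ else _) = _
    rw [if_neg d2.symm, if_neg d3.symm, if_pos rfl]
  have zvan : ∀ p, p ≠ (k, 0) → p ≠ (j, 0) → p ≠ (j, 1) → zc p = 0 := by
    intro p h1 h2 h3; simp [zc, h1, h2, h3]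
  -- entries of Q
  obtain ⟨q1, q2, q3, q4⟩ := hblock j k hjk
  have q1' : Q (k, 0) (j, 0) = (starRingEnd ℂ) L := by
    rw [← hQ.apply, q1]; rfl
  have q2' : Q (k, 0) (j, 1) = -W := by
    rw [← hQ.apply, q3]; simp; rfl
  have dk00 : Q (k, 0) (k, 0) = (a k : ℂ) := by simpa using hdiag k 0 0
  have dj00 : Q (j, 0) (j, 0) = (a j : ℂ) := by simpa using hdiag j 0 0
  have dj01 : Q (j, 0) (j, 1) = 0 := by simpa using hdiag j 0 1
  have dj10 : Q (j, 1) (j, 0) = 0 := by simpa using hdiag j 1 0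
  have dj11 : Q (j, 1) (j, 1) = (a j : ℂ) := by simpa using hdiag j 1 1
  -- inner sums of mulVec
  have inner : ∀ p, (Q.mulVec fun q => (starRingEnd ℂ) (zc q)) p =
      Q p (k, 0) * (starRingEnd ℂ) (zc (k, 0)) + Q p (j, 0) * (starRingEnd ℂ) (zc (j, 0)) +
      Q p (j, 1) * (starRingEnd ℂ) (zc (j, 1)) := by
    intro p
    simp only [Matrix.mulVec, dotProduct]
    exact sum_three _ (k, 0) (j, 0) (j, 1) d1 d2 d3
      (fun x h1 h2 h3 => by rw [zvan x h1 h2 h3, map_zero, mul_zero])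
  have main : zc ⬝ᵥ Q.mulVec (fun q => (starRingEnd ℂ) (zc q))
      = ((nrm + (a j + a k) / 2 : ℝ) : ℂ) := by
    rw [dotProduct, sum_three _ (k, 0) (j, 0) (j, 1) d1 d2 d3
      (fun x h1 h2 h3 => by rw [zvan x h1 h2 h3, zero_mul])]
    rw [inner, inner, inner, q1, q3, q1', q2', dk00, dj00, dj01, dj10, dj11,
      zk0, zj0, zj1]
    simp only [map_div₀, _root_.map_mul, map_neg, Complex.conj_conj, Complex.conj_ofReal]
    rw [← hL, ← hW]
    push_cast
    linear_combination
      (-(2 * ((Real.sqrt 2 : ℝ) : ℂ)⁻¹ ^ 2 * ((nrm : ℝ) : ℂ)⁻¹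
          + (a j : ℂ) * ((Real.sqrt 2 : ℝ) : ℂ)⁻¹ ^ 2 * ((nrm : ℝ) : ℂ)⁻¹ ^ 2)) * hN2c
      + (2 * ((Real.sqrt 2 : ℝ) : ℂ)⁻¹ ^ 2 * ((nrm : ℝ) : ℂ)
          + (a j : ℂ) * ((Real.sqrt 2 : ℝ) : ℂ)⁻¹ ^ 2 * (((nrm : ℝ) : ℂ) * ((nrm : ℝ) : ℂ)⁻¹ + 1)) * hNi
      + (((a k : ℂ) + 2 * ((nrm : ℝ) : ℂ) + (a j : ℂ)) / 2
          * (((Real.sqrt 2 : ℝ) : ℂ) * ((Real.sqrt 2 : ℝ) : ℂ)⁻¹ + 1)) * hsi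
      - (((a k : ℂ) + 2 * ((nrm : ℝ) : ℂ) + (a j : ℂ)) / 2 * ((Real.sqrt 2 : ℝ) : ℂ)⁻¹ ^ 2) * hs2c
  refine ⟨main, ?_⟩
  have : Nonempty (Fin n × Fin 2) := ⟨(j, 0)⟩
  refine rayleigh_le hQ (fun q => (starRingEnd ℂ) (zc q)) ?_ ?_
  · show (star fun q => (starRingEnd ℂ) (zc q)) ⬝ᵥ _ = 1
    have hstar : (star fun q => (starRingEnd ℂ) (zc q)) = zc := by
      ext q; simp
    rw [hstar, dotProduct, sum_three _ (k, 0) (j, 0) (j, 1) d1 d2 d3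
      (fun x h1 h2 h3 => by rw [zvan x h1 h2 h3, zero_mul]), zk0, zj0, zj1]
    simp only [map_div₀, _root_.map_mul, map_neg, Complex.conj_conj, Complex.conj_ofReal]
    push_cast
    linear_combination
      (-(((Real.sqrt 2 : ℝ) : ℂ)⁻¹ ^ 2 * ((nrm : ℝ) : ℂ)⁻¹ ^ 2)) * hN2c
      + (((Real.sqrt 2 : ℝ) : ℂ)⁻¹ ^ 2 * (((nrm : ℝ) : ℂ) * ((nrm : ℝ) : ℂ)⁻¹ + 1)) * hNi
      + (((Real.sqrt 2 : ℝ) : ℂ) * ((Real.sqrt 2 : ℝ) : ℂ)⁻¹ + 1) * hsi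
      - (((Real.sqrt 2 : ℝ) : ℂ)⁻¹ ^ 2) * hs2c
  · have hstar : (star fun q => (starRingEnd ℂ) (zc q)) = zc := by
      ext q; simp
    rw [hstar]
    exact main
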